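/- Let H¹, …, Hʳ be n×n real matrices and K₀ an n×n real matrix with ‖Hⁱ − K₀‖_F > 0 for each i. Define the weights w_i = 1 / (2 ‖Hⁱ − K₀‖_F), and let K₁ be any matrix satisfying Σ_{i=1}^r w_i ‖Hⁱ − K₁‖_F² ≤ Σ_{i=1}^r w_i ‖Hⁱ − K₀‖_F² (for instance, the minimizer of the weighted objective). Then Σ_{i=1}^r ‖Hⁱ − K₁‖_F ≤ Σ_{i=1}^r ‖Hⁱ − K₀‖_F; i.e., the self-weighted update with w_i = 1/(2‖Hⁱ − K‖_F) does not increase the objective Σᵢ ‖Hⁱ − K‖_F. -/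

import Mathlib

open Matrix BigOperators

/-- The Frobenius norm `‖M‖_F = √(∑ᵢⱼ Mᵢⱼ²)` of a real matrix. -/
noncomputable def frobNorm {n : ℕ} (M : Matrix (Fin n) (Fin n) ℝ) : ℝ :=
  Real.sqrt (∑ i, ∑ j, (M i j) ^ 2)

/-- With weights `wᵢ = 1/(2‖Hⁱ − K₀‖_F)`, if `K₁` satisfies
`∑ᵢ wᵢ ‖Hⁱ − K₁‖_F² ≤ ∑ᵢ wᵢ ‖Hⁱ − K₀‖_F²` (e.g. the minimizer of the weighted objective),
then `∑ᵢ ‖Hⁱ − K₁‖_F ≤ ∑ᵢ ‖Hⁱ − K₀‖_F`: the self-weighted update does not increase the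
objective `∑ᵢ ‖Hⁱ − K‖_F`. -/
theorem self_weighted_update_decreases_objective
    (n r : ℕ) (H : Fin r → Matrix (Fin n) (Fin n) ℝ)
    (K₀ K₁ : Matrix (Fin n) (Fin n) ℝ)
    (hpos : ∀ i, 0 < frobNorm (H i - K₀))
    (w : Fin r → ℝ) (hw : ∀ i, w i = 1 / (2 * frobNorm (H i - K₀)))
    (hdec : ∑ i, w i * (frobNorm (H i - K₁)) ^ 2 ≤ ∑ i, w i * (frobNorm (H i - K₀)) ^ 2) :
    ∑ i, frobNorm (H i - K₁) ≤ ∑ i, frobNorm (H i - K₀) := by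
  set a : Fin r → ℝ := fun i => frobNorm (H i - K₁) with ha
  set b : Fin r → ℝ := fun i => frobNorm (H i - K₀) with hb
  have hbne : ∀ i, b i ≠ 0 := fun i => ne_of_gt (hpos i)
  have hanneg : ∀ i, 0 ≤ a i := fun i => Real.sqrt_nonneg _
  have key : ∀ i, a i ≤ w i * (a i)^2 + b i / 2 := by
    intro i
    rw [hw i]
    have hb' := hpos i
    have h2 : 2 * (a i) * (b i) ≤ (a i)^2 + (b i)^2 := by nlinarith [sq_nonneg (a i - b i)]
    have h3 : a i ≤ ((a i)^2 + (b i)^2) / (2 * b i) := by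
      rw [le_div_iff₀ (by positivity)]
      nlinarith
    have h4 : ((a i)^2 + (b i)^2) / (2 * b i) = 1 / (2 * frobNorm (H i - K₀)) * (a i)^2 + b i / 2 := by
      show _ = 1 / (2 * b i) * (a i)^2 + b i / 2
      field_simp
    linarith
  have key2 : ∀ i, w i * (b i)^2 = b i / 2 := by
    intro i
    rw [hw i]
    show 1 / (2 * b i) * (b i)^2 = b i / 2
    rw [div_mul_eq_mul_div, one_mul, div_eq_div_iff (mul_ne_zero two_ne_zero (hbne i)) two_ne_zero]; ring
  calc ∑ i, a i ≤ ∑ i, (w i * (a i)^2 + b i / 2) := Finset.sum_le_sum fun i _ => key i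
    _ = ∑ i, w i * (a i)^2 + ∑ i, b i / 2 := Finset.sum_add_distrib
    _ ≤ ∑ i, w i * (b i)^2 + ∑ i, b i / 2 := by linarith [hdec]
    _ = ∑ i, (b i / 2) + ∑ i, b i / 2 := by rw [Finset.sum_congr rfl fun i _ => key2 i]
    _ = ∑ i, b i := by rw [← Finset.sum_add_distrib]; apply Finset.sum_congr rfl; intros; ring
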